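/- Let f be represented by the LPB a·x_1 + a·x_2 + ... + a·x_l + a_{l+1}·x_{l+1} + ... + a_m·x_m ≥ d, and for each 0 ≤ k ≤ l let f_k(y) = f(e_k, y) with e_k having exactly k true entries among the first l. Suppose for each k, the set of valid degrees for representing f_k with left-hand side Σ_{i>l} a_i·x_i is the interval (s_k, b_k]. Then the set of valid degrees for representing f with the left-hand side a·x_1 + ... + a·x_l + Σ_{i>l} a_i·x_i is (s, b] where s = max_k (s_k + k·a) and b = min_k (b_k + k·a). -/

import Mathlib

/-- For each `k ≤ l` there is an assignment to `Fin l → Bool` with exactly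
`k` true entries. -/
lemma exists_card_k (l k : ℕ) (hkl : k ≤ l) :
    ∃ e : Fin l → Bool,
      (Finset.univ.filter (fun i => e i = true)).card = k := by
  refine ⟨fun i => decide ((i : ℕ) < k), ?_⟩
  have : (Finset.univ.filter (fun i : Fin l => (decide ((i : ℕ) < k)) = true))
      = Finset.univ.filter (fun i : Fin l => (i : ℕ) < k) := by
    simp
  rw [this]
  have : Finset.univ.filter (fun i : Fin l => (i : ℕ) < k)
      = (Finset.range k).attachFin (fun m hm => lt_of_lt_of_le (Finset.mem_range.1 hm) hkl) := by
    ext i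
    simp [Finset.mem_attachFin]
  rw [this, Finset.card_attachFin, Finset.card_range]

/-- Maintaining minimum and maximum degrees when splitting away `l` symmetric
variables with common coefficient `a`: the interval of valid degrees for `f`
is `(max_k (s_k + k·a), min_k (b_k + k·a)]`. -/
theorem stmt_14 (l r : ℕ) (a : ℝ) (ha : 0 ≤ a) (b : Fin r → ℝ) (hb : ∀ j, 0 ≤ b j)
    (f : (Fin l → Bool) → (Fin r → Bool) → Bool)
    (s B : ℕ → EReal)
    (hne : ∀ k ≤ l, s k < B k)
    (hk : ∀ k ≤ l, ∀ d' : ℝ,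
      (∀ (e : Fin l → Bool) (y : Fin r → Bool),
          (Finset.univ.filter (fun i => e i = true)).card = k →
          (f e y = true ↔ d' ≤ ∑ j, (if y j then b j else 0))) ↔
        (s k < (d' : EReal) ∧ (d' : EReal) ≤ B k)) :
    ∀ d : ℝ,
      (∀ (e : Fin l → Bool) (y : Fin r → Bool),
          f e y = true ↔
            d ≤ a * (Finset.univ.filter (fun i => e i = true)).card +
                  ∑ j, (if y j then b j else 0)) ↔
        ((Finset.range (l + 1)).sup' Finset.nonempty_range_add_one
            (fun k => s k + ((k * a : ℝ) : EReal)) < (d : EReal) ∧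
          (d : EReal) ≤ (Finset.range (l + 1)).inf' Finset.nonempty_range_add_one
            (fun k => B k + ((k * a : ℝ) : EReal))) := by
  intro d
  -- the key pointwise equivalence for each k
  have key : ∀ k, k ≤ l →
      ((∀ (e : Fin l → Bool) (y : Fin r → Bool),
          (Finset.univ.filter (fun i => e i = true)).card = k →
          (f e y = true ↔ d - k * a ≤ ∑ j, (if y j then b j else 0))) ↔
        (s k + ((k * a : ℝ) : EReal) < (d : EReal) ∧
          (d : EReal) ≤ B k + ((k * a : ℝ) : EReal))) := by
    intro k hkl
    rw [hk k hkl (d - k * a)]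
    constructor
    · rintro ⟨h1, h2⟩
      constructor
      · rw [← EReal.lt_sub_iff_add_lt (Or.inl (EReal.coe_ne_bot _))
          (Or.inl (EReal.coe_ne_top _)), ← EReal.coe_sub]
        exact h1
      · rw [← EReal.sub_le_iff_le_add (Or.inl (EReal.coe_ne_bot _))
          (Or.inl (EReal.coe_ne_top _)), ← EReal.coe_sub]
        exact h2
    · rintro ⟨h1, h2⟩
      constructor
      · rw [← EReal.lt_sub_iff_add_lt (Or.inl (EReal.coe_ne_bot _))
          (Or.inl (EReal.coe_ne_top _)), ← EReal.coe_sub] at h1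
        exact h1
      · rw [← EReal.sub_le_iff_le_add (Or.inl (EReal.coe_ne_bot _))
          (Or.inl (EReal.coe_ne_top _)), ← EReal.coe_sub] at h2
        exact h2
  rw [Finset.sup'_lt_iff, Finset.le_inf'_iff]
  constructor
  · intro H
    have : ∀ k ∈ Finset.range (l + 1),
        s k + ((k * a : ℝ) : EReal) < (d : EReal) ∧
          (d : EReal) ≤ B k + ((k * a : ℝ) : EReal) := by
      intro k hkmem
      have hkl : k ≤ l := Nat.lt_succ_iff.1 (Finset.mem_range.1 hkmem)
      refine (key k hkl).1 ?_
      intro e y hcard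
      rw [H e y, hcard]
      constructor <;> intro h <;> linarith
    exact ⟨fun k hkmem => (this k hkmem).1, fun k hkmem => (this k hkmem).2⟩
  · rintro ⟨H1, H2⟩ e y
    set k := (Finset.univ.filter (fun i => e i = true)).card with hkdef
    have hkl : k ≤ l := by
      calc k ≤ (Finset.univ : Finset (Fin l)).card := Finset.card_filter_le _ _
        _ = l := Finset.card_univ.trans (Fintype.card_fin l)
    have hkmem : k ∈ Finset.range (l + 1) := Finset.mem_range.2 (Nat.lt_succ_of_le hkl)
    have := (key k hkl).2 ⟨H1 k hkmem, H2 k hkmem⟩ e y rfl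
    rw [this]
    constructor <;> intro h <;> linarith
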